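/- arXiv:2307.16868 — 2 statements merged into one kernel-verified Lean document; each statement's English description precedes it below -/
import Mathlib

section
/- There exists a closed 7-prince's tour on the 8×8 chessboard; that is, the graph whose vertices are the cells of the 8×8 board, with two cells (i,j) and (u,v) adjacent if and only if |i-u|+|j-v| = 7, has a Hamiltonian cycle. -/
/-- The `k`-prince graph on an `m × n` board: cells `(i,j)` and `(u,v)` are adjacent
iff `|i - u| + |j - v| = k`. -/
def princeGraph (m n k : ℕ) : SimpleGraph (Fin m × Fin n) where
  Adj p q := p ≠ q ∧ |(p.1 : ℤ) - (q.1 : ℤ)| + |(p.2 : ℤ) - (q.2 : ℤ)| = k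
  symm := ⟨by
    rintro p q ⟨hne, h⟩
    refine ⟨hne.symm, ?_⟩
    rw [abs_sub_comm ((q.1 : ℤ)), abs_sub_comm ((q.2 : ℤ))]
    exact h⟩
  loopless := ⟨fun p h => h.1 rfl⟩

def tour : (princeGraph 8 8 7).Walk (0,0) (0,0) :=
  SimpleGraph.Walk.cons (u := (0,0)) (v := (3,4)) ⟨by decide, by decide⟩ (SimpleGraph.Walk.cons (u := (3,4)) (v := (6,0)) ⟨by decide, by decide⟩ (SimpleGraph.Walk.cons (u := (6,0)) (v := (2,3)) ⟨by decide, by decide⟩ (SimpleGraph.Walk.cons (u := (2,3)) (v := (7,1)) ⟨by decide, by decide⟩ (SimpleGraph.Walk.cons (u := (7,1)) (v := (4,5)) ⟨by decide, by decide⟩ (SimpleGraph.Walk.cons (u := (4,5)) (v := (0,2)) ⟨by decide, by decide⟩ (SimpleGraph.Walk.cons (u := (0,2)) (v := (5,4)) ⟨by decide, by decide⟩ (SimpleGraph.Walk.cons (u := (5,4)) (v := (1,1)) ⟨by decide, by decide⟩ (SimpleGraph.Walk.cons (u := (1,1)) (v := (3,6)) ⟨by decide, by decide⟩ (SimpleGraph.Walk.cons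 (u := (3,6)) (v := (2,0)) ⟨by decide, by decide⟩ (SimpleGraph.Walk.cons (u := (2,0)) (v := (6,3)) ⟨by decide, by decide⟩ (SimpleGraph.Walk.cons (u := (6,3)) (v := (1,5)) ⟨by decide, by decide⟩ (SimpleGraph.Walk.cons (u := (1,5)) (v := (5,2)) ⟨by decide, by decide⟩ (SimpleGraph.Walk.cons (u := (5,2)) (v := (2,6)) ⟨by decide, by decide⟩ (SimpleGraph.Walk.cons (u := (2,6)) (v := (0,1)) ⟨by decide, by decide⟩ (SimpleGraph.Walk.cons (u := (0,1)) (v := (4,4)) ⟨by decide, by decide⟩ (SimpleGraph.Walk.cons (u := (4,4)) (v := (0,7)) ⟨by decide, by decide⟩ (SimpleGraph.Walk.cons (u := (0,7)) (v := (3,3)) ⟨by decide, by decide⟩ (SimpleGraph.Walk.cons (u := (3,3)) (v := (6,7)) ⟨by decide, by decide⟩ (SimpleGraph.Walk.cons (u := (6,7)) (v := (2,4)) ⟨by decide, by decide⟩ (SimpleGraph.Walk.cons (u := (2,4)) (v := (7,2)) ⟨by decide, by decide⟩ (SimpleGraph.Walk.cons (u := (7,2)) (v := (3,5)) ⟨by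 decide, by decide⟩ (SimpleGraph.Walk.cons (u := (3,5)) (v := (1,0)) ⟨by decide, by decide⟩ (SimpleGraph.Walk.cons (u := (1,0)) (v := (5,3)) ⟨by decide, by decide⟩ (SimpleGraph.Walk.cons (u := (5,3)) (v := (2,7)) ⟨by decide, by decide⟩ (SimpleGraph.Walk.cons (u := (2,7)) (v := (4,2)) ⟨by decide, by decide⟩ (SimpleGraph.Walk.cons (u := (4,2)) (v := (7,6)) ⟨by decide, by decide⟩ (SimpleGraph.Walk.cons (u := (7,6)) (v := (0,6)) ⟨by decide, by decide⟩ (SimpleGraph.Walk.cons (u := (0,6)) (v := (4,3)) ⟨by decide, by decide⟩ (SimpleGraph.Walk.cons (u := (4,3)) (v := (1,7)) ⟨by decide, by decide⟩ (SimpleGraph.Walk.cons (u := (1,7)) (v := (3,2)) ⟨by decide, by decide⟩ (SimpleGraph.Walk.cons (u := (3,2)) (v := (5,7)) ⟨by decide, by decide⟩ (SimpleGraph.Walk.cons (u := (5,7)) (v := (6,1)) ⟨by decide, by decide⟩ (SimpleGraph.Walk.cons (u := (6,1)) (v := (7,7)) ⟨by decide, by decide⟩ (SimpleGraph.Walk.cons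 (u := (7,7)) (v := (1,6)) ⟨by decide, by decide⟩ (SimpleGraph.Walk.cons (u := (1,6)) (v := (7,5)) ⟨by decide, by decide⟩ (SimpleGraph.Walk.cons (u := (7,5)) (v := (0,5)) ⟨by decide, by decide⟩ (SimpleGraph.Walk.cons (u := (0,5)) (v := (3,1)) ⟨by decide, by decide⟩ (SimpleGraph.Walk.cons (u := (3,1)) (v := (5,6)) ⟨by decide, by decide⟩ (SimpleGraph.Walk.cons (u := (5,6)) (v := (1,3)) ⟨by decide, by decide⟩ (SimpleGraph.Walk.cons (u := (1,3)) (v := (5,0)) ⟨by decide, by decide⟩ (SimpleGraph.Walk.cons (u := (5,0)) (v := (6,6)) ⟨by decide, by decide⟩ (SimpleGraph.Walk.cons (u := (6,6)) (v := (4,1)) ⟨by decide, by decide⟩ (SimpleGraph.Walk.cons (u := (4,1)) (v := (0,4)) ⟨by decide, by decide⟩ (SimpleGraph.Walk.cons (u := (0,4)) (v := (6,5)) ⟨by decide, by decide⟩ (SimpleGraph.Walk.cons (u := (6,5)) (v := (2,2)) ⟨by decide, by decide⟩ (SimpleGraph.Walk.cons (u := (2,2)) (v := (7,0)) ⟨by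 decide, by decide⟩ (SimpleGraph.Walk.cons (u := (7,0)) (v := (5,5)) ⟨by decide, by decide⟩ (SimpleGraph.Walk.cons (u := (5,5)) (v := (1,2)) ⟨by decide, by decide⟩ (SimpleGraph.Walk.cons (u := (1,2)) (v := (4,6)) ⟨by decide, by decide⟩ (SimpleGraph.Walk.cons (u := (4,6)) (v := (2,1)) ⟨by decide, by decide⟩ (SimpleGraph.Walk.cons (u := (2,1)) (v := (6,4)) ⟨by decide, by decide⟩ (SimpleGraph.Walk.cons (u := (6,4)) (v := (3,0)) ⟨by decide, by decide⟩ (SimpleGraph.Walk.cons (u := (3,0)) (v := (3,7)) ⟨by decide, by decide⟩ (SimpleGraph.Walk.cons (u := (3,7)) (v := (7,4)) ⟨by decide, by decide⟩ (SimpleGraph.Walk.cons (u := (7,4)) (v := (4,0)) ⟨by decide, by decide⟩ (SimpleGraph.Walk.cons (u := (4,0)) (v := (0,3)) ⟨by decide, by decide⟩ (SimpleGraph.Walk.cons (u := (0,3)) (v := (5,1)) ⟨by decide, by decide⟩ (SimpleGraph.Walk.cons (u := (5,1)) (v := (1,4)) ⟨by decide, by decide⟩ (SimpleGraph.Walk.cons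 (u := (1,4)) (v := (6,2)) ⟨by decide, by decide⟩ (SimpleGraph.Walk.cons (u := (6,2)) (v := (4,7)) ⟨by decide, by decide⟩ (SimpleGraph.Walk.cons (u := (4,7)) (v := (7,3)) ⟨by decide, by decide⟩ (SimpleGraph.Walk.cons (u := (7,3)) (v := (2,5)) ⟨by decide, by decide⟩ (SimpleGraph.Walk.cons (u := (2,5)) (v := (0,0)) ⟨by decide, by decide⟩ (SimpleGraph.Walk.nil))))))))))))))))))))))))))))))))))))))))))))))))))))))))))))))))

/-- There exists a closed 7-prince's tour on the 8×8 chessboard. -/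
theorem prince7_tour_8x8 :
    ∃ (v : Fin 8 × Fin 8) (p : (princeGraph 8 8 7).Walk v v), p.IsHamiltonianCycle := by
  refine ⟨(0,0), tour, ?_⟩
  rw [SimpleGraph.Walk.isHamiltonianCycle_iff_isCycle_and_support_count_tail_eq_one]
  refine ⟨?_, by decide⟩
  rw [SimpleGraph.Walk.isCycle_def, SimpleGraph.Walk.isTrail_def]
  refine ⟨by decide, by unfold tour; exact nofun, by decide⟩
end

section
/- For every integer n with 1 ≤ n ≤ 4 and every odd positive integer k with k ≤ 2n−1, there exists a closed k-prince's tour on the 2n×2n chessboard. -/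
instance (m n k : ℕ) : DecidableRel (princeGraph m n k).Adj := fun p q =>
  inferInstanceAs (Decidable (p ≠ q ∧ |(p.1 : ℤ) - (q.1 : ℤ)| + |(p.2 : ℤ) - (q.2 : ℤ)| = (k : ℤ)))

def chainB {V : Type*} (G : SimpleGraph V) [DecidableRel G.Adj] : V → List V → Bool
  | _, [] => true
  | v, x :: l => decide (G.Adj v x) && chainB G x l

lemma chain_of_chainB {V : Type*} {G : SimpleGraph V} [DecidableRel G.Adj] :
    ∀ (v : V) (l : List V), chainB G v l = true → List.Chain G.Adj v l
  | _, [], _ => List.Chain.nil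
  | v, x :: l, h => by
      rw [chainB, Bool.and_eq_true, decide_eq_true_eq] at h
      exact List.Chain.cons h.1 (chain_of_chainB x l h.2)

open SimpleGraph Walk in
def walkOfChain {V : Type*} {G : SimpleGraph V} :
    (v w : V) → (l : List V) → List.Chain G.Adj v (l ++ [w]) → G.Walk v w
  | _, _, [], h => Walk.cons (List.chain_cons.mp h).1 Walk.nil
  | v, w, x :: l, h =>
      Walk.cons (List.chain_cons.mp h).1 (walkOfChain x w l (List.chain_cons.mp h).2)

open SimpleGraph Walk in
lemma walkOfChain_support {V : Type*} {G : SimpleGraph V} :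
    ∀ (v w : V) (l : List V) (h : List.Chain G.Adj v (l ++ [w])),
      (walkOfChain v w l h).support = v :: (l ++ [w])
  | _, _, [], _ => rfl
  | v, w, x :: l, h => by
      simp [walkOfChain, walkOfChain_support x w l (List.chain_cons.mp h).2]

open SimpleGraph Walk in
lemma walkOfChain_ne_nil {V : Type*} {G : SimpleGraph V} (v : V) (l : List V)
    (h : List.Chain G.Adj v (l ++ [v])) : walkOfChain v v l h ≠ Walk.nil := by
  cases l <;> simp [walkOfChain]

open SimpleGraph Walk in
lemma hamOfList {V : Type*} [DecidableEq V] {G : SimpleGraph V} (v : V) (l : List V)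
    (h : List.Chain G.Adj v (l ++ [v]))
    (hedges : (walkOfChain v v l h).edges.Nodup)
    (hcount : ∀ a, (l ++ [v]).count a = 1) :
    (walkOfChain v v l h).IsHamiltonianCycle := by
  rw [isHamiltonianCycle_iff_isCycle_and_support_count_tail_eq_one]
  refine ⟨?_, ?_⟩
  · rw [isCycle_def]
    refine ⟨⟨hedges⟩, walkOfChain_ne_nil v l h, ?_⟩
    rw [walkOfChain_support]
    simp only [List.tail_cons]
    exact List.nodup_iff_count_le_one.mpr fun a => le_of_eq (hcount a)
  · intro a
    rw [walkOfChain_support]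
    simpa using hcount a

def tour2_1 : List (Fin 2 × Fin 2) := [(0,1), (1,1), (1,0), (0,0)]

def tour4_1 : List (Fin 4 × Fin 4) := [(0,1), (0,2), (0,3), (1,3), (1,2), (1,1), (2,1), (2,2), (2,3), (3,3), (3,2), (3,1), (3,0), (2,0), (1,0), (0,0)]

def tour4_3 : List (Fin 4 × Fin 4) := [(0,3), (1,1), (3,0), (2,2), (0,1), (1,3), (1,0), (3,1), (2,3), (0,2), (3,2), (2,0), (1,2), (3,3), (2,1), (0,0)]

def tour6_1 : List (Fin 6 × Fin 6) := [(0,1), (0,2), (0,3), (0,4), (0,5), (1,5), (1,4), (1,3), (1,2), (1,1), (2,1), (2,2), (2,3), (2,4), (2,5), (3,5), (3,4), (3,3), (3,2), (3,1), (4,1), (4,2), (4,3), (4,4), (4,5), (5,5), (5,4), (5,3), (5,2), (5,1), (5,0), (4,0), (3,0), (2,0), (1,0), (0,0)]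

def tour6_3 : List (Fin 6 × Fin 6) := [(0,3), (1,5), (4,5), (5,3), (5,0), (2,0), (0,1), (0,4), (1,2), (2,4), (0,5), (0,2), (1,0), (3,1), (2,3), (1,1), (4,1), (4,4), (1,4), (3,5), (3,2), (4,0), (5,2), (5,5), (2,5), (1,3), (3,4), (2,2), (4,3), (5,1), (2,1), (3,3), (5,4), (4,2), (3,0), (0,0)]

def tour6_5 : List (Fin 6 × Fin 6) := [(2,3), (4,0), (1,2), (5,1), (3,4), (0,2), (4,1), (1,3), (4,5), (2,2), (5,4), (3,1), (1,4), (5,5), (3,2), (0,4), (4,3), (1,5), (0,1), (2,4), (1,0), (3,3), (0,5), (1,1), (5,2), (2,0), (2,5), (4,2), (0,3), (3,5), (2,1), (5,3), (3,0), (4,4), (5,0), (0,0)]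

def tour8_1 : List (Fin 8 × Fin 8) := [(1,0), (2,0), (3,0), (4,0), (5,0), (6,0), (7,0), (7,1), (7,2), (7,3), (7,4), (7,5), (7,6), (7,7), (6,7), (5,7), (4,7), (3,7), (2,7), (1,7), (0,7), (0,6), (1,6), (2,6), (3,6), (4,6), (5,6), (6,6), (6,5), (5,5), (4,5), (3,5), (2,5), (1,5), (0,5), (0,4), (1,4), (2,4), (3,4), (4,4), (5,4), (6,4), (6,3), (6,2), (6,1), (5,1), (4,1), (3,1), (2,1), (1,1), (1,2), (2,2), (3,2), (4,2), (5,2), (5,3), (4,3), (3,3), (2,3), (1,3), (0,3), (0,2), (0,1), (0,0)]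

def tour8_3 : List (Fin 8 × Fin 8) := [(3,0), (6,0), (7,2), (7,5), (6,7), (3,7), (0,7), (0,4), (1,6), (4,6), (7,6), (5,7), (2,7), (0,6), (0,3), (1,1), (4,1), (7,1), (5,0), (2,0), (0,1), (2,2), (1,0), (0,2), (1,4), (1,7), (0,5), (1,3), (2,5), (5,5), (6,3), (6,6), (7,4), (7,7), (4,7), (2,6), (5,6), (6,4), (3,4), (1,5), (3,6), (4,4), (6,5), (3,5), (2,3), (5,3), (4,5), (3,3), (5,2), (3,1), (1,2), (4,2), (6,1), (7,3), (7,0), (6,2), (5,4), (5,1), (3,2), (4,0), (4,3), (2,4), (2,1), (0,0)]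

def tour8_5 : List (Fin 8 × Fin 8) := [(5,0), (1,1), (0,5), (3,7), (7,6), (7,1), (6,5), (6,0), (1,0), (5,1), (0,1), (0,6), (2,3), (1,7), (1,2), (4,0), (4,5), (7,3), (6,7), (6,2), (5,6), (1,5), (3,2), (2,6), (2,1), (0,4), (5,4), (7,7), (7,2), (3,3), (7,4), (4,6), (0,7), (3,5), (3,0), (4,4), (2,7), (2,2), (6,1), (5,5), (1,6), (6,6), (4,3), (0,2), (3,4), (5,7), (6,3), (2,4), (4,1), (1,3), (5,2), (2,0), (0,3), (3,1), (7,0), (7,5), (2,5), (4,2), (4,7), (6,4), (3,6), (5,3), (1,4), (0,0)]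

def tour8_7 : List (Fin 8 × Fin 8) := [(4,3), (0,6), (3,2), (1,7), (5,4), (1,1), (4,5), (0,2), (3,6), (2,0), (6,3), (1,5), (5,2), (2,6), (1,0), (4,4), (0,1), (3,5), (7,2), (2,4), (6,1), (5,7), (2,3), (7,1), (3,4), (7,7), (0,7), (3,3), (6,7), (6,0), (7,6), (4,2), (1,6), (5,3), (2,7), (7,5), (5,0), (6,6), (4,1), (3,7), (1,2), (4,6), (2,1), (5,5), (7,0), (2,2), (7,4), (1,3), (5,6), (0,4), (3,0), (6,4), (0,5), (3,1), (6,5), (4,0), (4,7), (5,1), (1,4), (6,2), (0,3), (7,3), (2,5), (0,0)]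

set_option maxHeartbeats 4000000 in
/-- For every `1 ≤ n ≤ 4` and every odd positive `k ≤ 2n - 1`, there exists a closed
`k`-prince's tour on the `2n × 2n` chessboard. -/
theorem prince_tour_small_even_boards (n k : ℕ) (hn1 : 1 ≤ n) (hn4 : n ≤ 4)
    (hk : Odd k) (hkpos : 0 < k) (hkle : k ≤ 2 * n - 1) :
    ∃ (v : Fin (2 * n) × Fin (2 * n)) (p : (princeGraph (2 * n) (2 * n) k).Walk v v),
      p.IsHamiltonianCycle := by
  interval_cases n <;> interval_cases k <;>
    first
    | exact ⟨((0 : Fin 2), (0 : Fin 2)), walkOfChain _ _ (tour2_1.dropLast) (chain_of_chainB _ _ (by decide)), hamOfList _ _ _ (by decide) (by decide)⟩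
    | exact ⟨((0 : Fin 4), (0 : Fin 4)), walkOfChain _ _ (tour4_1.dropLast) (chain_of_chainB _ _ (by decide)), hamOfList _ _ _ (by decide) (by decide)⟩
    | exact ⟨((0 : Fin 4), (0 : Fin 4)), walkOfChain _ _ (tour4_3.dropLast) (chain_of_chainB _ _ (by decide)), hamOfList _ _ _ (by decide) (by decide)⟩
    | exact ⟨((0 : Fin 6), (0 : Fin 6)), walkOfChain _ _ (tour6_1.dropLast) (chain_of_chainB _ _ (by decide)), hamOfList _ _ _ (by decide) (by decide)⟩
    | exact ⟨((0 : Fin 6), (0 : Fin 6)), walkOfChain _ _ (tour6_3.dropLast) (chain_of_chainB _ _ (by decide)), hamOfList _ _ _ (by decide) (by decide)⟩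
    | exact ⟨((0 : Fin 6), (0 : Fin 6)), walkOfChain _ _ (tour6_5.dropLast) (chain_of_chainB _ _ (by decide)), hamOfList _ _ _ (by decide) (by decide)⟩
    | exact ⟨((0 : Fin 8), (0 : Fin 8)), walkOfChain _ _ (tour8_1.dropLast) (chain_of_chainB _ _ (by decide)), hamOfList _ _ _ (by decide) (by decide)⟩
    | exact ⟨((0 : Fin 8), (0 : Fin 8)), walkOfChain _ _ (tour8_3.dropLast) (chain_of_chainB _ _ (by decide)), hamOfList _ _ _ (by decide) (by decide)⟩
    | exact ⟨((0 : Fin 8), (0 : Fin 8)), walkOfChain _ _ (tour8_5.dropLast) (chain_of_chainB _ _ (by decide)), hamOfList _ _ _ (by decide) (by decide)⟩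
    | exact ⟨((0 : Fin 8), (0 : Fin 8)), walkOfChain _ _ (tour8_7.dropLast) (chain_of_chainB _ _ (by decide)), hamOfList _ _ _ (by decide) (by decide)⟩
    | (exact absurd hk (by decide))
end
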